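/- Define f : ℝ → ℝ by f(y) := ∫₀^y 2√(√(1+z²) − 1) / (1+z²)^{5/4} dz. Then f is odd, and for every θ ∈ [0, π/2), f(tan θ) = 4(√2 − √(1 + cos θ)). -/

import Mathlib

open Real Set intervalIntegral

noncomputable def myItg (z : ℝ) : ℝ :=
  2 * Real.sqrt (Real.sqrt (1 + z ^ 2) - 1) / (1 + z ^ 2) ^ ((5:ℝ)/4)

lemma myItg_cont : Continuous myItg := by
  have h1 : Continuous fun z : ℝ => 1 + z ^ 2 := by continuity
  apply Continuous.div
  · exact continuous_const.mul ((h1.sqrt.sub continuous_const).sqrt)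
  · exact h1.rpow_const (fun x => Or.inr (by norm_num))
  · intro x
    have : (0:ℝ) < 1 + x ^ 2 := by positivity
    exact ne_of_gt (Real.rpow_pos_of_pos this _)

lemma myItg_even (z : ℝ) : myItg (-z) = myItg z := by
  simp [myItg, neg_pow]

noncomputable def myG (y : ℝ) : ℝ :=
  4 * (Real.sqrt 2 - Real.sqrt (1 + (Real.sqrt (1 + y ^ 2))⁻¹))

lemma myG_zero : myG 0 = 0 := by
  simp only [myG, ne_eq, OfNat.ofNat_ne_zero, not_false_eq_true, zero_pow, add_zero,
    Real.sqrt_one, inv_one]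
  rw [show (1:ℝ) + 1 = 2 by norm_num, sub_self, mul_zero]

lemma myG_deriv (x : ℝ) (hx : 0 ≤ x) : HasDerivAt myG (myItg x) x := by
  have hpos : (0:ℝ) < 1 + x ^ 2 := by positivity
  set s := Real.sqrt (1 + x ^ 2) with hsdef
  have hs0 : 0 < s := Real.sqrt_pos.mpr hpos
  have hsq : s ^ 2 = 1 + x ^ 2 := Real.sq_sqrt hpos.le
  have hs1 : 1 ≤ s := by nlinarith [hsq]
  have h1 : HasDerivAt (fun y : ℝ => 1 + y ^ 2) (2 * x) x := by
    simpa using ((hasDerivAt_pow 2 x).const_add 1)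
  have h2 : HasDerivAt (fun y => Real.sqrt (1 + y ^ 2)) (2 * x / (2 * s)) x :=
    h1.sqrt (ne_of_gt hpos)
  have h3 : HasDerivAt (fun y => (Real.sqrt (1 + y ^ 2))⁻¹) (-(2 * x / (2 * s)) / s ^ 2) x :=
    h2.inv (ne_of_gt hs0)
  have h4 : HasDerivAt (fun y => 1 + (Real.sqrt (1 + y ^ 2))⁻¹) (-(2 * x / (2 * s)) / s ^ 2) x :=
    h3.const_add 1
  have hip : (0:ℝ) < 1 + s⁻¹ := by positivity
  have h5 : HasDerivAt (fun y => Real.sqrt (1 + (Real.sqrt (1 + y ^ 2))⁻¹))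
      ((-(2 * x / (2 * s)) / s ^ 2) / (2 * Real.sqrt (1 + s⁻¹))) x :=
    h4.sqrt (ne_of_gt hip)
  have h6 : HasDerivAt myG
      (4 * (0 - (-(2 * x / (2 * s)) / s ^ 2) / (2 * Real.sqrt (1 + s⁻¹)))) x :=
    ((hasDerivAt_const x (Real.sqrt 2)).sub h5).const_mul 4
  convert h6 using 1
  -- algebraic identity
  have hA : Real.sqrt (s + 1) ^ 2 = s + 1 := Real.sq_sqrt (by linarith)
  have hB : Real.sqrt s ^ 2 = s := Real.sq_sqrt hs0.le
  have hA0 : 0 < Real.sqrt (s + 1) := Real.sqrt_pos.mpr (by linarith)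
  have hB0 : 0 < Real.sqrt s := Real.sqrt_pos.mpr hs0
  have hCA : Real.sqrt (s - 1) * Real.sqrt (s + 1) = x := by
    rw [← Real.sqrt_mul (by linarith)]
    have : (s - 1) * (s + 1) = x ^ 2 := by nlinarith [hsq]
    rw [this, Real.sqrt_sq hx]
  have hfrac : Real.sqrt (1 + s⁻¹) = Real.sqrt (s + 1) / Real.sqrt s := by
    rw [show 1 + s⁻¹ = (s + 1) / s by field_simp, Real.sqrt_div (by linarith)]
  have hD : (1 + x ^ 2) ^ ((5:ℝ)/4) = s ^ 2 * Real.sqrt s := by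
    have h14 : Real.sqrt s = (1 + x ^ 2) ^ ((1:ℝ)/4) := by
      rw [hsdef, Real.sqrt_eq_rpow, Real.sqrt_eq_rpow, ← Real.rpow_mul hpos.le]
      norm_num
    rw [h14, hsq, show ((5:ℝ)/4) = 1 + 1/4 by norm_num, Real.rpow_add hpos, Real.rpow_one]
  rw [myItg, hfrac, hD, ← hsdef]
  have hAne := hA0.ne'
  have hBne := hB0.ne'
  have hsne := hs0.ne'
  field_simp
  linear_combination 4*s*hCA - 4*x*hB

lemma myKey (y : ℝ) (hy : 0 ≤ y) : (∫ z in (0:ℝ)..y, myItg z) = myG y := by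
  have := intervalIntegral.integral_eq_sub_of_hasDerivAt (f := myG) (f' := myItg)
    (a := 0) (b := y)
    (fun x hx => by
      refine myG_deriv x ?_
      rw [Set.uIcc_of_le hy] at hx
      exact hx.1)
    (myItg_cont.intervalIntegrable 0 y)
  rw [this, myG_zero, sub_zero]

theorem f_odd_and_value
    (f : ℝ → ℝ)
    (hf : ∀ y : ℝ, f y =
      ∫ z in (0:ℝ)..y, 2 * Real.sqrt (Real.sqrt (1 + z ^ 2) - 1) / (1 + z ^ 2) ^ ((5:ℝ)/4)) :
    (∀ y : ℝ, f (-y) = -f y) ∧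
    (∀ θ ∈ Ico (0:ℝ) (π / 2), f (Real.tan θ) = 4 * (Real.sqrt 2 - Real.sqrt (1 + Real.cos θ))) := by
  have hfi : ∀ y : ℝ, f y = ∫ z in (0:ℝ)..y, myItg z := by
    intro y; rw [hf]; rfl
  constructor
  · intro y
    rw [hfi, hfi]
    have h := intervalIntegral.integral_comp_neg (a := (0:ℝ)) (b := -y) myItg
    simp only [myItg_even, neg_zero, neg_neg] at h
    rw [h, intervalIntegral.integral_symm]
  · intro θ hθ
    obtain ⟨hθ1, hθ2⟩ := hθ
    have hc : 0 < Real.cos θ := Real.cos_pos_of_mem_Ioo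
      ⟨lt_of_lt_of_le (by linarith [Real.pi_pos]) hθ1, hθ2⟩
    have ht : 0 ≤ Real.tan θ := by
      rw [Real.tan_eq_sin_div_cos]
      exact div_nonneg (Real.sin_nonneg_of_nonneg_of_le_pi hθ1
        (by linarith [Real.pi_pos])) hc.le
    have hsq2 : Real.sqrt (1 + Real.tan θ ^ 2) = (Real.cos θ)⁻¹ := by
      have h1 : 1 + Real.tan θ ^ 2 = ((Real.cos θ)⁻¹) ^ 2 := by
        rw [Real.tan_eq_sin_div_cos]
        field_simp
        exact Real.cos_sq_add_sin_sq θ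

      rw [h1, Real.sqrt_sq (by positivity)]
    rw [hfi, myKey _ ht, myG, hsq2, inv_inv]
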